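/- arXiv:1404.4518 — 3 statements merged into one kernel-verified Lean document; each statement's English description precedes it below -/
import Mathlib

section
/- Let A_Γ be symmetric positive definite, B symmetric with c·φᵀA_Γφ ≤ φᵀBφ for all φ and A_Γ − 2B positive semidefinite (so φᵀBφ ≤ ½φᵀA_Γφ). Then the condition number of B satisfies κ(B) ≤ κ(A_Γ)/(2c). -/
open Matrix

lemma quad_form_bounds {m : Type*} [Fintype m] [DecidableEq m] [Nonempty m]
    (A : Matrix m m ℝ) (hA : A.IsHermitian) (φ : m → ℝ) :
    (⨅ i, hA.eigenvalues i) * (φ ⬝ᵥ φ) ≤ φ ⬝ᵥ (A *ᵥ φ) ∧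
      φ ⬝ᵥ (A *ᵥ φ) ≤ (⨆ i, hA.eigenvalues i) * (φ ⬝ᵥ φ) := by
  classical
  set U : Matrix m m ℝ := (hA.eigenvectorUnitary : Matrix m m ℝ) with hU
  set ψ : m → ℝ := (star U) *ᵥ φ with hψ
  have hquad : φ ⬝ᵥ (A *ᵥ φ) = ∑ j, hA.eigenvalues j * (ψ j)^2 := by
    conv_lhs => rw [hA.spectral_theorem, Unitary.conjStarAlgAut_apply]
    rw [← mulVec_mulVec, ← mulVec_mulVec, dotProduct_mulVec φ U, ← hψ]
    have hsd : star ψ = ψ := by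
      ext j; simp [hψ]
    have hvm : φ ᵥ* U = ψ := by
      ext j
      simp [hψ, vecMul, mulVec, dotProduct, conjTranspose_apply, mul_comm]
    rw [hvm]
    simp [dotProduct, mulVec_diagonal, Finset.mul_sum, pow_two, mul_comm, mul_left_comm]
  have hnorm : φ ⬝ᵥ φ = ∑ j, (ψ j)^2 := by
    have hUU : U * star U = 1 := (Matrix.mem_unitaryGroup_iff).mp hA.eigenvectorUnitary.2
    have : ψ ⬝ᵥ ψ = φ ⬝ᵥ ((U * star U) *ᵥ φ) := by
      rw [hψ, ← mulVec_mulVec, dotProduct_mulVec φ U]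
      congr 1
      ext j
      simp [vecMul, mulVec, dotProduct, conjTranspose_apply, mul_comm]
    rw [hUU, one_mulVec] at this
    rw [← this]
    simp [dotProduct, pow_two]
  have hbdd : BddAbove (Set.range hA.eigenvalues) := Set.Finite.bddAbove (Set.finite_range _)
  have hbddb : BddBelow (Set.range hA.eigenvalues) := Set.Finite.bddBelow (Set.finite_range _)
  constructor
  · rw [hquad, hnorm, Finset.mul_sum]
    apply Finset.sum_le_sum
    intro j _
    exact mul_le_mul_of_nonneg_right (ciInf_le hbddb j) (sq_nonneg _)
  · rw [hquad, hnorm, Finset.mul_sum]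
    apply Finset.sum_le_sum
    intro j _
    exact mul_le_mul_of_nonneg_right (le_ciSup hbdd j) (sq_nonneg _)

/-- Let `AΓ` be symmetric positive definite and `B` symmetric with
`c·φᵀAΓφ ≤ φᵀBφ` for all `φ` (with `0 < c < 1/2`) and `AΓ − 2B` positive
semidefinite (so `φᵀBφ ≤ ½ φᵀAΓφ`).  Then the condition number of `B`
satisfies `κ(B) ≤ κ(AΓ)/(2c)`. -/
theorem condition_number_bound
    {m : Type*} [Fintype m] [DecidableEq m] [Nonempty m]
    (AΓ B : Matrix m m ℝ) (c : ℝ)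
    (hAΓ : AΓ.PosDef) (hB : B.IsHermitian)
    (hc0 : 0 < c) (hc : c < 1/2)
    (hlow : ∀ φ : m → ℝ, c * (φ ⬝ᵥ (AΓ *ᵥ φ)) ≤ φ ⬝ᵥ (B *ᵥ φ))
    (hup : (AΓ - 2 • B).PosSemidef) :
    (⨆ i, hB.eigenvalues i) / (⨅ i, hB.eigenvalues i) ≤
      (⨆ i, hAΓ.1.eigenvalues i) / (2 * c * ⨅ i, hAΓ.1.eigenvalues i) := by
  classical
  set a := ⨅ i, hAΓ.1.eigenvalues i with ha
  set b := ⨆ i, hAΓ.1.eigenvalues i with hb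
  have ha_pos : 0 < a := by
    obtain ⟨i, hi⟩ := exists_eq_ciInf_of_finite (f := hAΓ.1.eigenvalues)
    rw [ha, ← hi]
    exact hAΓ.eigenvalues_pos i
  -- each eigenvalue of B equals vᵀ B v for a unit eigenvector v
  have key : ∀ i : m, c * a ≤ hB.eigenvalues i ∧ hB.eigenvalues i ≤ b / 2 := by
    intro i
    set v : m → ℝ := ⇑(hB.eigenvectorBasis i) with hv
    have hvv : v ⬝ᵥ v = 1 := by
      have := hB.eigenvectorBasis.orthonormal.1 i
      have h2 : (inner ℝ (hB.eigenvectorBasis i) (hB.eigenvectorBasis i) : ℝ) = 1 := by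
        rw [real_inner_self_eq_norm_sq, this]; norm_num
      rw [← h2]
      simp [PiLp.inner_apply, dotProduct, hv, mul_comm]
      rw [← h2, PiLp.inner_apply]
      simp only [RCLike.inner_apply, conj_trivial]
    have heig : hB.eigenvalues i = v ⬝ᵥ (B *ᵥ v) := by
      have := hB.eigenvalues_eq i
      simpa using this
    have hAbounds := quad_form_bounds AΓ hAΓ.1 v
    rw [hvv, mul_one, mul_one] at hAbounds
    constructor
    · rw [heig]
      calc c * a ≤ c * (v ⬝ᵥ (AΓ *ᵥ v)) :=
            mul_le_mul_of_nonneg_left hAbounds.1 hc0.le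
        _ ≤ v ⬝ᵥ (B *ᵥ v) := hlow v
    · have hps := hup.dotProduct_mulVec_nonneg v
      have hsub : v ⬝ᵥ ((AΓ - 2 • B) *ᵥ v) = v ⬝ᵥ (AΓ *ᵥ v) - 2 * (v ⬝ᵥ (B *ᵥ v)) := by
        rw [sub_mulVec, dotProduct_sub]
        congr 1
        rw [smul_mulVec, dotProduct_smul]
        simp
      simp only [RCLike.re_to_real, star_trivial] at hps
      rw [hsub] at hps
      rw [heig]
      linarith [hAbounds.2]
  have hsupB : (⨆ i, hB.eigenvalues i) ≤ b / 2 := ciSup_le fun i => (key i).2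
  have hinfB : c * a ≤ ⨅ i, hB.eigenvalues i := le_ciInf fun i => (key i).1
  have hca : 0 < c * a := mul_pos hc0 ha_pos
  have hsupB_nonneg : 0 ≤ ⨆ i, hB.eigenvalues i := by
    obtain ⟨i⟩ := ‹Nonempty m›
    have := (key i).1
    have hle : hB.eigenvalues i ≤ ⨆ j, hB.eigenvalues j :=
      le_ciSup (Set.Finite.bddAbove (Set.finite_range _)) i
    nlinarith
  have hb2 : 0 ≤ b / 2 := by
    obtain ⟨i⟩ := ‹Nonempty m›
    have hab : a ≤ b := le_trans (ciInf_le (Set.Finite.bddBelow (Set.finite_range _)) i)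
      (le_ciSup (Set.Finite.bddAbove (Set.finite_range _)) i)
    linarith
  calc (⨆ i, hB.eigenvalues i) / (⨅ i, hB.eigenvalues i)
      ≤ (b / 2) / (c * a) := div_le_div₀ hb2 hsupB hca hinfB
    _ = b / (2 * c * a) := by rw [div_div]; ring_nf
end

section
/- Let A_Γ, B be symmetric matrices with A_Γ positive definite, and suppose the eigenvalues of the generalized eigenvalue problem Bφ = σ A_Γ φ lie in (0, 1/2). Then the stationary iteration e⁽ⁿ⁾ = (A_Γ − B₁)⁻¹B₂·(A_Γ − B₂)⁻¹B₁ e⁽ⁿ⁻²⁾, with B₁, B₂ both satisfying these spectral bounds with constants a ≤ σ ≤ b (0<a≤b<1/2), converges: the error in the norm ‖E e‖₂ with E=(I−C)A_Γ^{1/2} contracts by factor at most (b/(1−b))² per double step. -/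
open Matrix

section SchwarzHelpers

variable {m : Type*} [Fintype m] [DecidableEq m]

lemma my_dot_self_nonneg (x : m → ℝ) : 0 ≤ x ⬝ᵥ x :=
  Finset.sum_nonneg fun _ _ => mul_self_nonneg _

lemma my_dot_shift (M : Matrix m m ℝ) (hM : Mᵀ = M) (x z : m → ℝ) :
    x ⬝ᵥ (M *ᵥ z) = (M *ᵥ x) ⬝ᵥ z := by
  rw [dotProduct_mulVec, ← mulVec_transpose, hM]

lemma my_dot_sym (M : Matrix m m ℝ) (hM : Mᵀ = M) (x y : m → ℝ) :
    x ⬝ᵥ (M *ᵥ y) = y ⬝ᵥ (M *ᵥ x) := by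
  rw [my_dot_shift M hM, dotProduct_comm]

lemma my_psd_cauchy (M : Matrix m m ℝ) (hM : Mᵀ = M)
    (hpsd : ∀ z, 0 ≤ z ⬝ᵥ (M *ᵥ z)) (x y : m → ℝ) :
    (x ⬝ᵥ (M *ᵥ y)) ^ 2 ≤ (x ⬝ᵥ (M *ᵥ x)) * (y ⬝ᵥ (M *ᵥ y)) := by
  have key : ∀ t : ℝ, 0 ≤ (y ⬝ᵥ (M *ᵥ y)) * (t * t) + (2 * (x ⬝ᵥ (M *ᵥ y))) * t
      + (x ⬝ᵥ (M *ᵥ x)) := by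
    intro t
    have h := hpsd (x + t • y)
    have expand : (x + t • y) ⬝ᵥ (M *ᵥ (x + t • y)) =
        (y ⬝ᵥ (M *ᵥ y)) * (t * t) + (2 * (x ⬝ᵥ (M *ᵥ y))) * t + (x ⬝ᵥ (M *ᵥ x)) := by
      rw [mulVec_add, mulVec_smul, dotProduct_add, add_dotProduct, add_dotProduct,
        dotProduct_smul, smul_dotProduct, dotProduct_smul, my_dot_sym M hM y x]
      simp only [smul_dotProduct, dotProduct_smul, smul_eq_mul]
      ring
    linarith [expand ▸ h]
  have hd := discrim_le_zero key
  rw [discrim] at hd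
  nlinarith [hd]

lemma my_cauchy (x y : m → ℝ) : (x ⬝ᵥ y) ^ 2 ≤ (x ⬝ᵥ x) * (y ⬝ᵥ y) := by
  have := my_psd_cauchy (1 : Matrix m m ℝ) transpose_one
    (fun z => by simpa [one_mulVec] using my_dot_self_nonneg z) x y
  simpa [one_mulVec] using this

/-- polarization: symmetric matrix with quadratic form bounded by `κ` has
`‖D x‖ ≤ κ ‖x‖`. -/
lemma my_opnorm (D : Matrix m m ℝ) (hD : Dᵀ = D) (κ : ℝ) (hκ : 0 ≤ κ)
    (h : ∀ x, |x ⬝ᵥ (D *ᵥ x)| ≤ κ * (x ⬝ᵥ x)) (x : m → ℝ) :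
    (D *ᵥ x) ⬝ᵥ (D *ᵥ x) ≤ κ ^ 2 * (x ⬝ᵥ x) := by
  set w := D *ᵥ x with hw
  set W := w ⬝ᵥ w with hW
  set X := x ⬝ᵥ x with hX
  have hWnn : 0 ≤ W := my_dot_self_nonneg w
  have hXnn : 0 ≤ X := my_dot_self_nonneg x
  rcases eq_or_lt_of_le hWnn with hW0 | hWpos
  · nlinarith
  have hwne : w ≠ 0 := by
    intro hh
    rw [hW, hh] at hWpos; simp at hWpos
  have hxne : x ≠ 0 := by
    intro hh
    apply hwne; rw [hw, hh, mulVec_zero]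
  have hXpos : 0 < X := by
    rcases eq_or_lt_of_le hXnn with h0 | h; · exact absurd (hX ▸ h0.symm) (by
      simpa [dotProduct_self_eq_zero] using hxne)
    · exact h
  -- polarization inequality
  have key : ∀ y : m → ℝ, 4 * (y ⬝ᵥ w) ≤ 2 * κ * (X + y ⬝ᵥ y) := by
    intro y
    have h1 := (abs_le.mp (h (x + y))).2
    have h2 := (abs_le.mp (h (x - y))).1
    have e1 : (x + y) ⬝ᵥ (D *ᵥ (x + y)) =
        x ⬝ᵥ (D *ᵥ x) + 2 * (y ⬝ᵥ w) + y ⬝ᵥ (D *ᵥ y) := by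
      rw [hw, mulVec_add, dotProduct_add, add_dotProduct, add_dotProduct,
        my_dot_sym D hD x y]
      ring
    have e2 : (x - y) ⬝ᵥ (D *ᵥ (x - y)) =
        x ⬝ᵥ (D *ᵥ x) - 2 * (y ⬝ᵥ w) + y ⬝ᵥ (D *ᵥ y) := by
      rw [hw, mulVec_sub, dotProduct_sub, sub_dotProduct, sub_dotProduct,
        my_dot_sym D hD x y]
      ring
    have n1 : (x + y) ⬝ᵥ (x + y) = X + 2 * (x ⬝ᵥ y) + y ⬝ᵥ y := by
      rw [hX, dotProduct_add, add_dotProduct, add_dotProduct, dotProduct_comm y x]; ring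
    have n2 : (x - y) ⬝ᵥ (x - y) = X - 2 * (x ⬝ᵥ y) + y ⬝ᵥ y := by
      rw [hX, dotProduct_sub, sub_dotProduct, sub_dotProduct, dotProduct_comm y x]; ring
    rw [e1, n1] at h1
    rw [e2, n2] at h2
    linarith
  set sX := Real.sqrt X with hsX
  set sW := Real.sqrt W with hsW
  have hsX2 : sX * sX = X := Real.mul_self_sqrt hXnn
  have hsW2 : sW * sW = W := Real.mul_self_sqrt hWnn
  have hsXpos : 0 < sX := Real.sqrt_pos.mpr hXpos
  have hsWpos : 0 < sW := Real.sqrt_pos.mpr hWpos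
  set t := sX / sW with htdef
  have ht : t * sW = sX := div_mul_cancel₀ _ hsWpos.ne'
  have this1 := key (t • w)
  simp only [smul_dotProduct, dotProduct_smul, smul_eq_mul] at this1
  rw [← hW] at this1
  have h1 : t * W = sX * sW := by
    rw [← hsW2, show t * (sW * sW) = t * sW * sW by ring, ht]
  rw [h1] at this1
  have h2 : t * (sX * sW) = X := by
    rw [show t * (sX * sW) = sX * (t * sW) by ring, ht, hsX2]
  rw [h2] at this1
  -- this1 : 4 * (sX * sW) ≤ 2 * κ * (X + X)
  have hle : sW ≤ κ * sX := by
    have h4 : 4 * (sX * sW) ≤ 4 * κ * (sX * sX) := by nlinarith [hsX2]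
    nlinarith [hsXpos]
  calc W = sW * sW := hsW2.symm
    _ ≤ (κ * sX) * (κ * sX) := by nlinarith [hsWpos]
    _ = κ ^ 2 * X := by rw [← hsX2]; ring

lemma my_dot_self_pos {x : m → ℝ} (hx : x ≠ 0) : 0 < x ⬝ᵥ x :=
  lt_of_le_of_ne (my_dot_self_nonneg x)
    (fun h => hx (dotProduct_self_eq_zero.mp h.symm))

lemma my_posDef (M : Matrix m m ℝ) (hM : Mᵀ = M) (α : ℝ) (hα : 0 < α)
    (hl : ∀ x, α * (x ⬝ᵥ x) ≤ x ⬝ᵥ (M *ᵥ x)) : M.PosDef := by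
  rw [posDef_iff_dotProduct_mulVec]
  constructor
  · rw [Matrix.IsHermitian, conjTranspose_eq_transpose_of_trivial, hM]
  · intro x hx
    have := hl x
    have hpos := my_dot_self_pos hx
    simp only [star_trivial]
    nlinarith

lemma my_inv_bounds (M : Matrix m m ℝ) (hM : Mᵀ = M) (α β : ℝ) (hα : 0 < α) (hβ : 0 < β)
    (hl : ∀ x, α * (x ⬝ᵥ x) ≤ x ⬝ᵥ (M *ᵥ x)) (hu : ∀ x, x ⬝ᵥ (M *ᵥ x) ≤ β * (x ⬝ᵥ x))
    (x : m → ℝ) :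
    (x ⬝ᵥ x) / β ≤ x ⬝ᵥ (M⁻¹ *ᵥ x) ∧ x ⬝ᵥ (M⁻¹ *ᵥ x) ≤ (x ⬝ᵥ x) / α := by
  have hPD := my_posDef M hM α hα hl
  have hdet : IsUnit M.det := hPD.det_pos.ne'.isUnit
  have hMM : M * M⁻¹ = 1 := mul_nonsing_inv M hdet
  set y := M⁻¹ *ᵥ x with hy
  have hxy : M *ᵥ y = x := by rw [hy, mulVec_mulVec, hMM, one_mulVec]
  set s := x ⬝ᵥ y with hs
  have hsy : y ⬝ᵥ x = s := dotProduct_comm y x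
  set X := x ⬝ᵥ x with hX
  set Y := y ⬝ᵥ y with hY
  have hXnn : 0 ≤ X := my_dot_self_nonneg x
  have hYnn : 0 ≤ Y := my_dot_self_nonneg y
  have hαY : α * Y ≤ s := by have := hl y; rw [hxy, hsy] at this; exact this
  have hsnn : 0 ≤ s := le_trans (mul_nonneg hα.le hYnn) hαY
  have hcs : s ^ 2 ≤ X * Y := my_cauchy x y
  have hpsd : ∀ z, 0 ≤ z ⬝ᵥ (M *ᵥ z) := fun z =>
    le_trans (mul_nonneg hα.le (my_dot_self_nonneg z)) (hl z)
  have hMcs : X ^ 2 ≤ (x ⬝ᵥ (M *ᵥ x)) * s := by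
    have := my_psd_cauchy M hM hpsd x y
    rw [hxy, hsy] at this
    exact this
  constructor
  · have hup := hu x
    rcases eq_or_lt_of_le hXnn with h0 | hXpos
    · rw [← h0]
      simpa using hsnn
    · have h2 : X ^ 2 ≤ β * X * s := by nlinarith [hMcs, hup, hsnn]
      rw [div_le_iff₀ hβ]
      nlinarith [hXpos]
  · have hY' : Y ≤ s / α := by rw [le_div_iff₀ hα]; nlinarith
    have h3 : s ^ 2 ≤ X * (s / α) := by nlinarith [hXnn]
    rcases eq_or_lt_of_le hsnn with h0 | hspos
    · rw [← h0]; positivity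
    · rw [le_div_iff₀ hα]
      have := mul_le_mul_of_nonneg_right hY' (le_of_lt hα)
      nlinarith [hspos, hα]

end SchwarzHelpers

/-- Convergence of the classical Schwarz iteration: let `AΓ` be symmetric
positive definite with positive definite square root `R` (`R * R = AΓ`), and
let `B₁, B₂` be symmetric with `a·φᵀAΓφ ≤ φᵀBᵢφ ≤ b·φᵀAΓφ` for all `φ`,
`0 < a ≤ b < 1/2`.  Then, with `C₁ := R⁻¹ B₁ R⁻¹` and `E := (I − C₁) R`, one
double step of the iteration
`e ↦ (AΓ − B₁)⁻¹ B₂ (AΓ − B₂)⁻¹ B₁ e` contracts the norm `‖E e‖₂` by the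
factor `(b/(1−b))²`. -/
theorem classical_schwarz_contraction
    {m : Type*} [Fintype m] [DecidableEq m]
    (AΓ R B₁ B₂ : Matrix m m ℝ) (a b : ℝ)
    (hAΓ : AΓ.PosDef) (hR : R.PosDef) (hRsq : R * R = AΓ)
    (hB₁ : B₁ᵀ = B₁) (hB₂ : B₂ᵀ = B₂)
    (ha : 0 < a) (hab : a ≤ b) (hb : b < 1/2)
    (h1low : ∀ φ : m → ℝ, a * (φ ⬝ᵥ (AΓ *ᵥ φ)) ≤ φ ⬝ᵥ (B₁ *ᵥ φ))
    (h1up : ∀ φ : m → ℝ, φ ⬝ᵥ (B₁ *ᵥ φ) ≤ b * (φ ⬝ᵥ (AΓ *ᵥ φ)))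
    (h2low : ∀ φ : m → ℝ, a * (φ ⬝ᵥ (AΓ *ᵥ φ)) ≤ φ ⬝ᵥ (B₂ *ᵥ φ))
    (h2up : ∀ φ : m → ℝ, φ ⬝ᵥ (B₂ *ᵥ φ) ≤ b * (φ ⬝ᵥ (AΓ *ᵥ φ)))
    (e e' : m → ℝ)
    (he' : e' = ((AΓ - B₁)⁻¹ * B₂ * ((AΓ - B₂)⁻¹ * B₁)) *ᵥ e) :
    Real.sqrt ((((1 - R⁻¹ * B₁ * R⁻¹) * R) *ᵥ e') ⬝ᵥ
        (((1 - R⁻¹ * B₁ * R⁻¹) * R) *ᵥ e')) ≤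
      (b / (1 - b)) ^ 2 *
        Real.sqrt ((((1 - R⁻¹ * B₁ * R⁻¹) * R) *ᵥ e) ⬝ᵥ
          (((1 - R⁻¹ * B₁ * R⁻¹) * R) *ᵥ e)) := by
  have hb1 : 0 < 1 - b := by linarith
  have ha1 : 0 < 1 - a := by linarith
  have hbpos : 0 < b := lt_of_lt_of_le ha hab
  -- basic facts about R
  have hRT : Rᵀ = R := by
    have := hR.1
    rwa [Matrix.IsHermitian, conjTranspose_eq_transpose_of_trivial] at this
  have hRdet : IsUnit R.det := hR.det_pos.ne'.isUnit
  have hRR : R * R⁻¹ = 1 := mul_nonsing_inv R hRdet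
  have hR'R : R⁻¹ * R = 1 := nonsing_inv_mul R hRdet
  have hRT' : (R⁻¹)ᵀ = R⁻¹ := by rw [transpose_nonsing_inv, hRT]
  set C₁ := R⁻¹ * B₁ * R⁻¹ with hC1def
  set C₂ := R⁻¹ * B₂ * R⁻¹ with hC2def
  have hC1T : C₁ᵀ = C₁ := by
    rw [hC1def, transpose_mul, transpose_mul, hRT', hB₁, mul_assoc]
  have hC2T : C₂ᵀ = C₂ := by
    rw [hC2def, transpose_mul, transpose_mul, hRT', hB₂, mul_assoc]
  -- quadratic form transfer
  have hAq : ∀ x : m → ℝ, (R⁻¹ *ᵥ x) ⬝ᵥ (AΓ *ᵥ (R⁻¹ *ᵥ x)) = x ⬝ᵥ x := by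
    intro x
    have h1 : AΓ *ᵥ (R⁻¹ *ᵥ x) = R *ᵥ x := by
      rw [← hRsq, mulVec_mulVec, mul_assoc, hRR, mul_one]
    rw [h1, my_dot_shift R hRT, mulVec_mulVec, hRR, one_mulVec]
  have hCq : ∀ (B : Matrix m m ℝ) (x : m → ℝ),
      x ⬝ᵥ ((R⁻¹ * B * R⁻¹) *ᵥ x) = (R⁻¹ *ᵥ x) ⬝ᵥ (B *ᵥ (R⁻¹ *ᵥ x)) := by
    intro B x
    rw [← mulVec_mulVec, ← mulVec_mulVec, my_dot_shift R⁻¹ hRT']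
  have hC1l : ∀ x, a * (x ⬝ᵥ x) ≤ x ⬝ᵥ (C₁ *ᵥ x) := fun x => by
    rw [hC1def, hCq B₁ x, ← hAq x]; exact h1low _
  have hC1u : ∀ x, x ⬝ᵥ (C₁ *ᵥ x) ≤ b * (x ⬝ᵥ x) := fun x => by
    rw [hC1def, hCq B₁ x, ← hAq x]; exact h1up _
  have hC2l : ∀ x, a * (x ⬝ᵥ x) ≤ x ⬝ᵥ (C₂ *ᵥ x) := fun x => by
    rw [hC2def, hCq B₂ x, ← hAq x]; exact h2low _
  have hC2u : ∀ x, x ⬝ᵥ (C₂ *ᵥ x) ≤ b * (x ⬝ᵥ x) := fun x => by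
    rw [hC2def, hCq B₂ x, ← hAq x]; exact h2up _
  set M₁ := 1 - C₁ with hM1def
  set M₂ := 1 - C₂ with hM2def
  have hM1T : M₁ᵀ = M₁ := by rw [hM1def, transpose_sub, transpose_one, hC1T]
  have hM2T : M₂ᵀ = M₂ := by rw [hM2def, transpose_sub, transpose_one, hC2T]
  have hMform : ∀ (M C : Matrix m m ℝ), M = 1 - C → ∀ x : m → ℝ,
      x ⬝ᵥ (M *ᵥ x) = x ⬝ᵥ x - x ⬝ᵥ (C *ᵥ x) := by
    intro M C hMC x
    rw [hMC, sub_mulVec, one_mulVec, dotProduct_sub]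
  have hM1l : ∀ x, (1 - b) * (x ⬝ᵥ x) ≤ x ⬝ᵥ (M₁ *ᵥ x) := fun x => by
    rw [hMform M₁ C₁ hM1def x]; have := hC1u x; have := my_dot_self_nonneg x; nlinarith
  have hM1u : ∀ x, x ⬝ᵥ (M₁ *ᵥ x) ≤ (1 - a) * (x ⬝ᵥ x) := fun x => by
    rw [hMform M₁ C₁ hM1def x]; have := hC1l x; have := my_dot_self_nonneg x; nlinarith
  have hM2l : ∀ x, (1 - b) * (x ⬝ᵥ x) ≤ x ⬝ᵥ (M₂ *ᵥ x) := fun x => by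
    rw [hMform M₂ C₂ hM2def x]; have := hC2u x; have := my_dot_self_nonneg x; nlinarith
  have hM2u : ∀ x, x ⬝ᵥ (M₂ *ᵥ x) ≤ (1 - a) * (x ⬝ᵥ x) := fun x => by
    rw [hMform M₂ C₂ hM2def x]; have := hC2l x; have := my_dot_self_nonneg x; nlinarith
  -- invertibility
  have hM1PD := my_posDef M₁ hM1T (1 - b) hb1 hM1l
  have hM2PD := my_posDef M₂ hM2T (1 - b) hb1 hM2l
  have hM1M : M₁ * M₁⁻¹ = 1 := mul_nonsing_inv M₁ hM1PD.det_pos.ne'.isUnit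
  have hM1M' : M₁⁻¹ * M₁ = 1 := nonsing_inv_mul M₁ hM1PD.det_pos.ne'.isUnit
  have hM2M : M₂ * M₂⁻¹ = 1 := mul_nonsing_inv M₂ hM2PD.det_pos.ne'.isUnit
  have hM2M' : M₂⁻¹ * M₂ = 1 := nonsing_inv_mul M₂ hM2PD.det_pos.ne'.isUnit
  -- quadratic bounds on D_i = M_i⁻¹ - 1
  set κ := b / (1 - b) with hκdef
  have hκnn : 0 ≤ κ := by positivity
  have hDbound : ∀ (M : Matrix m m ℝ), Mᵀ = M →
      (∀ x, (1 - b) * (x ⬝ᵥ x) ≤ x ⬝ᵥ (M *ᵥ x)) →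
      (∀ x, x ⬝ᵥ (M *ᵥ x) ≤ (1 - a) * (x ⬝ᵥ x)) →
      ∀ x, |x ⬝ᵥ ((M⁻¹ - 1) *ᵥ x)| ≤ κ * (x ⬝ᵥ x) := by
    intro M hMT hMl hMu x
    obtain ⟨hlo, hhi⟩ := my_inv_bounds M hMT (1 - b) (1 - a) hb1 ha1 hMl hMu x
    rw [sub_mulVec, one_mulVec, dotProduct_sub]
    set s := x ⬝ᵥ (M⁻¹ *ᵥ x)
    set X := x ⬝ᵥ x with hX
    have hXnn : 0 ≤ X := my_dot_self_nonneg x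
    rw [div_le_iff₀ ha1] at hlo
    rw [le_div_iff₀ hb1] at hhi
    rw [abs_le]
    constructor
    · have hκX : 0 ≤ κ * X := mul_nonneg hκnn hXnn
      nlinarith
    · rw [hκdef, div_mul_eq_mul_div, le_div_iff₀ hb1]
      nlinarith
  have hD1 := hDbound M₁ hM1T hM1l hM1u
  have hD2 := hDbound M₂ hM2T hM2l hM2u
  have hD1T : (M₁⁻¹ - 1)ᵀ = M₁⁻¹ - 1 := by
    rw [transpose_sub, transpose_one, transpose_nonsing_inv, hM1T]
  have hD2T : (M₂⁻¹ - 1)ᵀ = M₂⁻¹ - 1 := by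
    rw [transpose_sub, transpose_one, transpose_nonsing_inv, hM2T]
  -- matrix identity
  set E := M₁ * R with hEdef
  have hRC1R : R * C₁ * R = B₁ := by
    rw [hC1def]
    calc R * (R⁻¹ * B₁ * R⁻¹) * R = (R * R⁻¹) * B₁ * (R⁻¹ * R) := by noncomm_ring
      _ = B₁ := by rw [hRR, hR'R, one_mul, mul_one]
  have hRC2R : R * C₂ * R = B₂ := by
    rw [hC2def]
    calc R * (R⁻¹ * B₂ * R⁻¹) * R = (R * R⁻¹) * B₂ * (R⁻¹ * R) := by noncomm_ring
      _ = B₂ := by rw [hRR, hR'R, one_mul, mul_one]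
  have hA1 : AΓ - B₁ = R * M₁ * R := by
    rw [← hRsq, ← hRC1R, hM1def]; noncomm_ring
  have hA2 : AΓ - B₂ = R * M₂ * R := by
    rw [← hRsq, ← hRC2R, hM2def]; noncomm_ring
  have hA1i : (AΓ - B₁)⁻¹ = R⁻¹ * M₁⁻¹ * R⁻¹ := by
    rw [hA1, Matrix.mul_inv_rev, Matrix.mul_inv_rev]; noncomm_ring
  have hA2i : (AΓ - B₂)⁻¹ = R⁻¹ * M₂⁻¹ * R⁻¹ := by
    rw [hA2, Matrix.mul_inv_rev, Matrix.mul_inv_rev]; noncomm_ring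
  have hC1M : C₁ = 1 - M₁ := by rw [hM1def, sub_sub_cancel]
  have hC2M : C₂ = 1 - M₂ := by rw [hM2def, sub_sub_cancel]
  have cancel : ∀ (P Q : Matrix m m ℝ), P * Q = 1 → ∀ N, P * (Q * N) = N := by
    intro P Q h N; rw [← mul_assoc, h, one_mul]
  have hkey : E * ((AΓ - B₁)⁻¹ * B₂ * ((AΓ - B₂)⁻¹ * B₁)) =
      (M₂⁻¹ - 1) * ((M₁⁻¹ - 1) * E) := by
    rw [hA1i, hA2i, ← hRC1R, ← hRC2R, hEdef, hC1M, hC2M]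
    simp only [sub_mul, mul_sub, one_mul, mul_one, mul_assoc]
    simp only [cancel R R⁻¹ hRR, cancel R⁻¹ R hR'R, cancel M₁ M₁⁻¹ hM1M,
      cancel M₁⁻¹ M₁ hM1M', cancel M₂ M₂⁻¹ hM2M, cancel M₂⁻¹ M₂ hM2M',
      hRR, hR'R, hM1M, hM1M', hM2M, hM2M', mul_one, one_mul]
  -- apply to vectors
  have hvec : E *ᵥ e' = (M₂⁻¹ - 1) *ᵥ ((M₁⁻¹ - 1) *ᵥ (E *ᵥ e)) := by
    rw [he', mulVec_mulVec, hkey, ← mulVec_mulVec, ← mulVec_mulVec]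
  set v := E *ᵥ e with hv
  set v₁ := (M₁⁻¹ - 1) *ᵥ v with hv1
  have hop1 : v₁ ⬝ᵥ v₁ ≤ κ ^ 2 * (v ⬝ᵥ v) := my_opnorm (M₁⁻¹ - 1) hD1T κ hκnn hD1 v
  have hop2 : ((M₂⁻¹ - 1) *ᵥ v₁) ⬝ᵥ ((M₂⁻¹ - 1) *ᵥ v₁) ≤ κ ^ 2 * (v₁ ⬝ᵥ v₁) :=
    my_opnorm (M₂⁻¹ - 1) hD2T κ hκnn hD2 v₁
  rw [hvec]
  calc Real.sqrt (((M₂⁻¹ - 1) *ᵥ v₁) ⬝ᵥ ((M₂⁻¹ - 1) *ᵥ v₁))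
      ≤ Real.sqrt ((κ ^ 2) ^ 2 * (v ⬝ᵥ v)) := by
        apply Real.sqrt_le_sqrt
        have h1 := my_dot_self_nonneg v
        have h2 := my_dot_self_nonneg v₁
        nlinarith [sq_nonneg κ]
    _ = κ ^ 2 * Real.sqrt (v ⬝ᵥ v) := by
        rw [Real.sqrt_mul (by positivity), Real.sqrt_sq (by positivity)]
end

section
/- Let C be symmetric with eigenvalues in [1/2−c, 1/2−εh] where 0<εh≤c<1/2 and set p̂ = (1−√(h))/(1+√(h)) for small h>0 (so 1+p̂ = 2/(1+√h)). Then for h sufficiently small every eigenvalue of D̂ = I − (1−p̂)(I−(1+p̂)C)^{-1} lies in (−1, 1−c₂√h] for some constant c₂>0 depending only on c and ε, hence ρ(D̂) ≤ 1 − O(√h). -/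
open Matrix

/-- Let `C` be symmetric with eigenvalues in `[1/2 − c, 1/2 − εh]` where
`0 < ε`, `0 < c < 1/2`, and set `p̂ = (1 − √h)/(1 + √h)`.  Then there are
constants `c₂ > 0` and `h₀ > 0`, depending only on `c` and `ε`, such that for
all `0 < h < h₀` every eigenvalue of
`D̂ = I − (1 − p̂)(I − (1 + p̂)C)⁻¹` lies in `(−1, 1 − c₂√h]`; hence
`ρ(D̂) ≤ 1 − O(√h)`. -/
theorem optimized_schwarz_spectral_radius
    {m : Type*} [Fintype m] [DecidableEq m]
    (c ε : ℝ) (hε : 0 < ε) (hc0 : 0 < c) (hc : c < 1/2) :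
    ∃ c₂ > (0 : ℝ), ∃ h₀ > (0 : ℝ), ∀ h : ℝ, 0 < h → h < h₀ →
      ∀ C : Matrix m m ℝ, Cᵀ = C →
        (∀ (σ : ℝ) (φ : m → ℝ), φ ≠ 0 → C *ᵥ φ = σ • φ →
          1/2 - c ≤ σ ∧ σ ≤ 1/2 - ε * h) →
        ∀ (σhat : ℝ) (φ : m → ℝ), φ ≠ 0 →
          (1 - (1 - (1 - Real.sqrt h) / (1 + Real.sqrt h)) •
              (1 - (1 + (1 - Real.sqrt h) / (1 + Real.sqrt h)) • C)⁻¹) *ᵥ φ =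
            σhat • φ →
          -1 < σhat ∧ σhat ≤ 1 - c₂ * Real.sqrt h := by
  refine ⟨2 / (1 + 2 * c), by positivity, 1, by norm_num, ?_⟩
  intro h hh0 hh1 C _hCsym hspec σhat φ hφ hD
  set s := Real.sqrt h with hs_def
  have hs0 : 0 < s := Real.sqrt_pos.2 hh0
  have hs1 : s < 1 := by
    have := Real.sqrt_lt_sqrt hh0.le hh1
    simpa [hs_def] using this
  have hs2 : s ^ 2 = h := Real.sq_sqrt hh0.le
  have h1s : (0 : ℝ) < 1 + s := by linarith
  set p : ℝ := (1 - s) / (1 + s) with hp_def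
  have hb : 1 + p = 2 / (1 + s) := by
    field_simp [hp_def]
    have hpm : p * (1 + s) = 1 - s := by rw [hp_def]; exact div_mul_cancel₀ _ h1s.ne'
    linear_combination hpm
  have ha : 1 - p = 2 * s / (1 + s) := by
    field_simp [hp_def]
    have hpm : p * (1 + s) = 1 - s := by rw [hp_def]; exact div_mul_cancel₀ _ h1s.ne'
    linear_combination -hpm
  have hbpos : 0 < 1 + p := by rw [hb]; positivity
  have hapos : 0 < 1 - p := by rw [ha]; positivity
  set M : Matrix m m ℝ := 1 - (1 + p) • C with hM
  -- M is invertible since (1+p)⁻¹ is not an eigenvalue of C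
  have hMinj : Function.Injective M.mulVec := by
    intro v w hvw
    by_contra hne
    have hu : v - w ≠ 0 := sub_ne_zero.mpr hne
    have hMu : M *ᵥ (v - w) = 0 := by
      rw [mulVec_sub, hvw, sub_self]
    have hCu : C *ᵥ (v - w) = (1 + p)⁻¹ • (v - w) := by
      have : (v - w) - (1 + p) • (C *ᵥ (v - w)) = 0 := by
        have := hMu
        rwa [hM, sub_mulVec, one_mulVec, smul_mulVec] at this
      have h2 : (1 + p) • (C *ᵥ (v - w)) = v - w := by
        linear_combination (norm := module) -this
      calc C *ᵥ (v - w) = (1 + p)⁻¹ • ((1 + p) • (C *ᵥ (v - w))) := by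
            rw [smul_smul, inv_mul_cancel₀ hbpos.ne', one_smul]
        _ = (1 + p)⁻¹ • (v - w) := by rw [h2]
    have hbd := (hspec _ _ hu hCu).2
    have hinv : (1 + p)⁻¹ = (1 + s) / 2 := by rw [hb]; field_simp
    have hεh : 0 < ε * h := by positivity
    rw [hinv] at hbd
    linarith
  have hMunit : IsUnit M := mulVec_injective_iff_isUnit.mp hMinj
  have hMdet : IsUnit M.det := (isUnit_iff_isUnit_det M).mp hMunit
  -- extract the eigenvalue equation for M⁻¹
  have hD' : (1 - p) • (M⁻¹ *ᵥ φ) = (1 - σhat) • φ := by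
    have : φ - (1 - p) • (M⁻¹ *ᵥ φ) = σhat • φ := by
      have := hD
      rwa [sub_mulVec, one_mulVec, smul_mulVec] at this
    linear_combination (norm := module) -this
  have hMφ : (1 - p) • φ = (1 - σhat) • (M *ᵥ φ) := by
    have := congrArg (fun x => M *ᵥ x) hD'
    simp only [mulVec_smul] at this
    rwa [mulVec_mulVec, Matrix.mul_nonsing_inv M hMdet, one_mulVec] at this
  set τ : ℝ := 1 - σhat with hτ_def
  have hτ0 : τ ≠ 0 := by
    intro hτ
    rw [hτ, zero_smul] at hMφ
    exact hφ (by simpa [smul_eq_zero, hapos.ne'] using hMφ)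
  -- C φ = σ φ with σ = (1 - (1-p)/τ)/(1+p)
  have hCφ : C *ᵥ φ = ((1 - (1 - p) / τ) / (1 + p)) • φ := by
    have hMv : M *ᵥ φ = ((1 - p) / τ) • φ := by
      have h1 : τ • (M *ᵥ φ) = (1 - p) • φ := hMφ.symm
      calc M *ᵥ φ = τ⁻¹ • (τ • (M *ᵥ φ)) := by
            rw [smul_smul, inv_mul_cancel₀ hτ0, one_smul]
        _ = τ⁻¹ • ((1 - p) • φ) := by rw [h1]
        _ = ((1 - p) / τ) • φ := by rw [smul_smul]; ring_nf
    have h2 : (1 + p) • (C *ᵥ φ) = (1 - (1 - p) / τ) • φ := by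
      have h4 : φ - (1 + p) • (C *ᵥ φ) = ((1 - p) / τ) • φ := by
        have := hMv
        rwa [hM, sub_mulVec, one_mulVec, smul_mulVec] at this
      have h3 : (1 + p) • (C *ᵥ φ) = φ - ((1 - p) / τ) • φ := by
        linear_combination (norm := module) -h4
      rw [h3, sub_smul, one_smul]
    calc C *ᵥ φ = (1 + p)⁻¹ • ((1 + p) • (C *ᵥ φ)) := by
          rw [smul_smul, inv_mul_cancel₀ hbpos.ne', one_smul]
      _ = (1 + p)⁻¹ • ((1 - (1 - p) / τ) • φ) := by rw [h2]
      _ = ((1 - (1 - p) / τ) / (1 + p)) • φ := by rw [smul_smul]; ring_nf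
  obtain ⟨hσ1, hσ2⟩ := hspec _ _ hφ hCφ
  rw [ha, hb] at hσ1 hσ2
  have hσeq : (1 - 2 * s / (1 + s) / τ) / (2 / (1 + s))
      = (τ * (1 + s) - 2 * s) / (2 * τ) := by
    field_simp
  rw [hσeq] at hσ1 hσ2
  have hεh : 0 < ε * h := by positivity
  -- τ > 0
  have hτpos : 0 < τ := by
    rcases lt_trichotomy τ 0 with hτn | hτz | hτp
    · exfalso
      rw [div_le_iff_of_neg (by linarith : 2 * τ < 0)] at hσ2
      nlinarith [mul_neg_of_pos_of_neg hs0 hτn, mul_neg_of_pos_of_neg hεh hτn]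
    · exact absurd hτz hτ0
    · exact hτp
  rw [le_div_iff₀ (by positivity)] at hσ1
  rw [div_le_iff₀ (by positivity)] at hσ2
  constructor
  · -- σhat > -1 : τ < 2
    have hτlt2 : τ < 2 := by nlinarith [mul_pos hεh hτpos]
    have : 1 - σhat < 2 := by rw [← hτ_def]; exact hτlt2
    linarith
  · -- σhat ≤ 1 - (2/(1+2c)) s : τ ≥ 2s/(1+2c)
    have h12c : (0 : ℝ) < 1 + 2 * c := by linarith
    have hτge : 2 / (1 + 2 * c) * s ≤ τ := by
      rw [div_mul_eq_mul_div, div_le_iff₀ h12c]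
      nlinarith [mul_pos hs0 hτpos]
    have : 2 / (1 + 2 * c) * s ≤ 1 - σhat := by rw [← hτ_def]; exact hτge
    linarith
end
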